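/- Let G be a finite simple graph with n vertices and largest degree Δ, and let q be an integer with 1 ≤ q ≤ n − Δ − 1. Then η(G ∨ K_q) = max{η(G), q}, where G ∨ K_q is the join of G with the complete graph on q vertices. -/

import Mathlib

open Classical in
/-- Sum of the labels `f` over the open neighborhood of `v` in `G`. -/
noncomputable def nbrSum {V : Type*} [Fintype V] (G : SimpleGraph V) (f : V → ℕ) (v : V) : ℕ :=
  ∑ w ∈ Finset.univ.filter (fun w => G.Adj v w), f w

open Classical in
/-- The degree of `v` in `G`. -/
noncomputable def deg {V : Type*} [Fintype V] (G : SimpleGraph V) (v : V) : ℕ :=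
  (Finset.univ.filter (fun w => G.Adj v w)).card

/-- `f : V → {1,…,k}` is an additive `k`-coloring of `G`: labels lie in `{1,…,k}` and
adjacent vertices get distinct open-neighborhood sums. -/
def IsAdditiveColoring {V : Type*} [Fintype V] (G : SimpleGraph V) (k : ℕ) (f : V → ℕ) : Prop :=
  (∀ v, 1 ≤ f v ∧ f v ≤ k) ∧ ∀ u v, G.Adj u v → nbrSum G f u ≠ nbrSum G f v

/-- The additive chromatic number `η(G)`: the least `k` admitting an additive `k`-coloring. -/
noncomputable def eta {V : Type*} [Fintype V] (G : SimpleGraph V) : ℕ :=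
  sInf {k | ∃ f : V → ℕ, IsAdditiveColoring G k f}

/-- The join `G ∨ K_q` of `G` with the complete graph on `q` vertices. -/
def joinK {α : Type*} (G : SimpleGraph α) (q : ℕ) : SimpleGraph (α ⊕ Fin q) where
  Adj x y :=
    match x, y with
    | Sum.inl u, Sum.inl v => G.Adj u v
    | Sum.inr i, Sum.inr j => i ≠ j
    | Sum.inl _, Sum.inr _ => True
    | Sum.inr _, Sum.inl _ => True
  symm := by
    refine ⟨?_⟩
    rintro (u | i) (v | j) h
    · exact G.adj_symm h
    · trivial
    · trivial
    · exact Ne.symm h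
  loopless := by
    refine ⟨?_⟩
    rintro (u | i) h
    · exact G.irrefl h
    · exact h rfl

section Aux

variable {α : Type*} [Fintype α]

open Classical in
lemma nbrSum_ite (G : SimpleGraph α) (f : α → ℕ) (v : α) :
    nbrSum G f v = ∑ w, if G.Adj v w then f w else 0 := by
  rw [nbrSum, Finset.sum_filter]

lemma joinK_adj_inl_inl (G : SimpleGraph α) (q : ℕ) (u v : α) :
    (joinK G q).Adj (Sum.inl u) (Sum.inl v) ↔ G.Adj u v := Iff.rfl

lemma nbrSum_join_inl (G : SimpleGraph α) (q : ℕ) (f : α ⊕ Fin q → ℕ) (u : α) :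
    nbrSum (joinK G q) f (Sum.inl u)
      = nbrSum G (f ∘ Sum.inl) u + ∑ j, f (Sum.inr j) := by
  classical
  rw [nbrSum_ite, nbrSum_ite, Fintype.sum_sum_type]
  simp [joinK, Function.comp]
  exact Finset.sum_congr rfl fun x _ => by congr

lemma nbrSum_join_inr (G : SimpleGraph α) (q : ℕ) (f : α ⊕ Fin q → ℕ) (i : Fin q) :
    nbrSum (joinK G q) f (Sum.inr i) + f (Sum.inr i)
      = (∑ a, f (Sum.inl a)) + ∑ j, f (Sum.inr j) := by
  classical
  rw [nbrSum_ite, Fintype.sum_sum_type]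
  have h1 : (∑ a : α, if (joinK G q).Adj (Sum.inr i) (Sum.inl a) then f (Sum.inl a) else 0)
      = ∑ a, f (Sum.inl a) := by simp [joinK]
  have h2 : (∑ j : Fin q, if (joinK G q).Adj (Sum.inr i) (Sum.inr j) then f (Sum.inr j) else 0)
      = ∑ j, if j = i then 0 else f (Sum.inr j) := by
    refine Finset.sum_congr rfl fun j _ => ?_
    by_cases h : j = i
    · subst h; simp [joinK]
    · simp [joinK, h, Ne.symm h]
  have h3 : (∑ j : Fin q, if j = i then 0 else f (Sum.inr j))
        + (∑ j : Fin q, if j = i then f (Sum.inr j) else 0)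
      = ∑ j, f (Sum.inr j) := by
    rw [← Finset.sum_add_distrib]
    refine Finset.sum_congr rfl fun j _ => ?_
    by_cases h : j = i <;> simp [h]
  have h4 : (∑ j : Fin q, if j = i then f (Sum.inr j) else 0) = f (Sum.inr i) := by
    simp
  rw [h1, h2, add_assoc, ← h4]
  omega

lemma nbrSum_gap (G : SimpleGraph α) (f : α → ℕ) (hf : ∀ v, 1 ≤ f v) (u : α) (c : ℕ)
    (hc : deg G u + c ≤ Fintype.card α) :
    nbrSum G f u + c ≤ ∑ v, f v := by
  classical
  rw [nbrSum, deg] at *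
  have hsplit := Finset.sum_filter_add_sum_filter_not Finset.univ (fun w => G.Adj u w) f
  have hcard := Finset.card_filter_add_card_filter_not
    (s := (Finset.univ : Finset α)) (p := fun w => G.Adj u w)
  have h2 : (Finset.univ.filter (fun w => ¬ G.Adj u w)).card
      ≤ ∑ w ∈ Finset.univ.filter (fun w => ¬ G.Adj u w), f w := by
    calc (Finset.univ.filter (fun w => ¬ G.Adj u w)).card
        = ∑ _w ∈ Finset.univ.filter (fun w => ¬ G.Adj u w), 1 := by simp
      _ ≤ _ := Finset.sum_le_sum fun w _ => hf w
  simp only [Finset.card_univ] at hcard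
  omega

lemma two_pow_sum_inj : ∀ n (s t : Finset ℕ), (∀ x ∈ s, x < n) → (∀ x ∈ t, x < n) →
    (∑ i ∈ s, 2 ^ i) = (∑ i ∈ t, 2 ^ i) → s = t := by
  intro n
  induction n with
  | zero =>
    intro s t hs ht _
    rw [Finset.eq_empty_of_forall_notMem (fun x hx => absurd (hs x hx) (by omega)),
      Finset.eq_empty_of_forall_notMem (fun x hx => absurd (ht x hx) (by omega))]
  | succ n ih =>
    intro s t hs ht h
    have key : ∀ s t : Finset ℕ, (∀ x ∈ s, x < n + 1) → (∀ x ∈ t, x < n + 1) →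
        (∑ i ∈ s, 2 ^ i) = (∑ i ∈ t, 2 ^ i) → n ∈ s → n ∈ t := by
      intro s t hs ht h hns
      by_contra hnt
      have ht' : ∀ x ∈ t, x < n := fun x hx => by
        have := ht x hx; rcases Nat.lt_succ_iff_lt_or_eq.1 this with h' | h'
        · exact h'
        · exact absurd (h' ▸ hx) hnt
      have h1 : (2:ℕ) ^ n ≤ ∑ i ∈ s, 2 ^ i := Finset.single_le_sum (fun i _ => Nat.zero_le _) hns
      have h2 : (∑ i ∈ t, 2 ^ i) < 2 ^ n := Nat.geomSum_lt le_rfl ht'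
      omega
    by_cases hns : n ∈ s
    · have hnt : n ∈ t := key s t hs ht h hns
      have hs' : ∀ x ∈ s.erase n, x < n := fun x hx => by
        have h1 := Finset.mem_of_mem_erase hx
        have h2 := Finset.ne_of_mem_erase hx
        have := hs x h1; omega
      have ht' : ∀ x ∈ t.erase n, x < n := fun x hx => by
        have h1 := Finset.mem_of_mem_erase hx
        have h2 := Finset.ne_of_mem_erase hx
        have := ht x h1; omega
      have es : (∑ i ∈ s, 2 ^ i) = 2 ^ n + ∑ i ∈ s.erase n, 2 ^ i :=
        (Finset.add_sum_erase s _ hns).symm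
      have et : (∑ i ∈ t, 2 ^ i) = 2 ^ n + ∑ i ∈ t.erase n, 2 ^ i :=
        (Finset.add_sum_erase t _ hnt).symm
      have := ih (s.erase n) (t.erase n) hs' ht' (by omega)
      rw [← Finset.insert_erase hns, ← Finset.insert_erase hnt, this]
    · have hnt : n ∉ t := fun hnt => hns (key t s ht hs h.symm hnt)
      have hs' : ∀ x ∈ s, x < n := fun x hx => by
        have := hs x hx
        rcases Nat.lt_succ_iff_lt_or_eq.1 this with h' | h'
        · exact h'
        · exact absurd (h' ▸ hx) hns
      have ht' : ∀ x ∈ t, x < n := fun x hx => by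
        have := ht x hx
        rcases Nat.lt_succ_iff_lt_or_eq.1 this with h' | h'
        · exact h'
        · exact absurd (h' ▸ hx) hnt
      exact ih s t hs' ht' h

lemma exists_coloring (G : SimpleGraph α) : ∃ k f, IsAdditiveColoring G k f := by
  classical
  set n := Fintype.card α with hn
  obtain e := Fintype.equivFin α
  refine ⟨2 ^ n, fun v => 2 ^ (e v : ℕ), ⟨fun v => ⟨Nat.one_le_two_pow, ?_⟩, ?_⟩⟩
  · exact Nat.pow_le_pow_right (by norm_num) (le_of_lt (e v).isLt)
  · intro u v huv heq
    have himg : ∀ w : α, nbrSum G (fun v => 2 ^ (e v : ℕ)) w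
        = ∑ i ∈ (Finset.univ.filter (fun x => G.Adj w x)).image (fun x => (e x : ℕ)), 2 ^ i := by
      intro w
      rw [nbrSum, Finset.sum_image]
      intro x _ y _ hxy
      exact e.injective (Fin.ext hxy)
    rw [himg, himg] at heq
    have hbd : ∀ s : Finset α, ∀ x ∈ s.image (fun x => (e x : ℕ)), x < n := by
      intro s x hx
      obtain ⟨y, _, rfl⟩ := Finset.mem_image.1 hx
      exact (e y).isLt
    have := two_pow_sum_inj n _ _ (hbd _) (hbd _) heq
    have himginj : Function.Injective (fun x : α => (e x : ℕ)) :=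
      fun x y hxy => e.injective (Fin.ext hxy)
    have hsets := Finset.image_injective himginj this
    have hv : v ∈ Finset.univ.filter (fun x => G.Adj u x) := by simp [huv]
    rw [hsets] at hv
    simp at hv

lemma coloring_mono (G : SimpleGraph α) {k k' : ℕ} {f : α → ℕ} (h : IsAdditiveColoring G k f)
    (hk : k ≤ k') : IsAdditiveColoring G k' f :=
  ⟨fun v => ⟨(h.1 v).1, le_trans (h.1 v).2 hk⟩, h.2⟩

end Aux

/-- If `Δ` is the largest degree of `G` and `1 ≤ q ≤ n - Δ - 1`, then
`η(G ∨ K_q) = max(η(G), q)`. -/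
theorem eta_join_complete {α : Type*} [Fintype α] (G : SimpleGraph α) (q Δ : ℕ)
    (hΔub : ∀ v, deg G v ≤ Δ) (hΔmem : ∃ v, deg G v = Δ)
    (hq : 1 ≤ q) (hqn : q + Δ + 1 ≤ Fintype.card α) :
    eta (joinK G q) = max (eta G) q := by
  classical
  obtain ⟨k0, f0, hf0⟩ := exists_coloring G
  have hne : {k | ∃ f : α → ℕ, IsAdditiveColoring G k f}.Nonempty := ⟨k0, f0, hf0⟩
  obtain ⟨f, hf⟩ : ∃ f, IsAdditiveColoring G (eta G) f := Nat.sInf_mem hne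
  set m := max (eta G) q with hm
  set F : α ⊕ Fin q → ℕ := Sum.elim f (fun i => (i : ℕ) + 1) with hF
  have hFinl : F ∘ Sum.inl = f := rfl
  have hFm : IsAdditiveColoring (joinK G q) m F := by
    constructor
    · rintro (v | i)
      · exact ⟨(hf.1 v).1, le_trans (hf.1 v).2 (le_max_left _ _)⟩
      · exact ⟨Nat.le_add_left 1 _, le_trans i.isLt (le_max_right (eta G) q)⟩
    · have cross : ∀ (u : α) (i : Fin q),
          nbrSum (joinK G q) F (Sum.inl u) < nbrSum (joinK G q) F (Sum.inr i) := by
        intro u i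
        have e1 := nbrSum_join_inl G q F u
        have e2 := nbrSum_join_inr G q F i
        have hgap : nbrSum G f u + (q + 1) ≤ ∑ v, f v :=
          nbrSum_gap G f (fun v => (hf.1 v).1) u (q + 1) (by have := hΔub u; omega)
        have hFi : F (Sum.inr i) = (i : ℕ) + 1 := rfl
        have hiq : (i : ℕ) + 1 ≤ q := i.isLt
        have hsum : (∑ a, F (Sum.inl a)) = ∑ v, f v := rfl
        rw [hFinl] at e1
        omega
      rintro (u | i) (v | j) hadj heq
      · have e1 := nbrSum_join_inl G q F u
        have e2 := nbrSum_join_inl G q F v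
        rw [hFinl] at e1 e2
        exact hf.2 u v hadj (by omega)
      · exact absurd heq (Nat.ne_of_lt (cross u j))
      · exact absurd heq.symm (Nat.ne_of_lt (cross v i))
      · have hij : i ≠ j := hadj
        have e1 := nbrSum_join_inr G q F i
        have e2 := nbrSum_join_inr G q F j
        have hFi : F (Sum.inr i) = (i : ℕ) + 1 := rfl
        have hFj : F (Sum.inr j) = (j : ℕ) + 1 := rfl
        have : (i : ℕ) = (j : ℕ) := by omega
        exact hij (Fin.ext this)
  have hneJ : {k | ∃ h : α ⊕ Fin q → ℕ, IsAdditiveColoring (joinK G q) k h}.Nonempty :=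
    ⟨m, F, hFm⟩
  have hub : eta (joinK G q) ≤ m := Nat.sInf_le ⟨F, hFm⟩
  obtain ⟨h, hh⟩ : ∃ h, IsAdditiveColoring (joinK G q) (eta (joinK G q)) h := Nat.sInf_mem hneJ
  have h1 : eta G ≤ eta (joinK G q) := by
    refine Nat.sInf_le ⟨h ∘ Sum.inl, ⟨fun v => hh.1 (Sum.inl v), ?_⟩⟩
    intro u v hadj heq
    have e1 := nbrSum_join_inl G q h u
    have e2 := nbrSum_join_inl G q h v
    exact hh.2 (Sum.inl u) (Sum.inl v) hadj (by omega)
  have h2 : q ≤ eta (joinK G q) := by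
    set g : Fin q → ℕ := fun i => h (Sum.inr i) with hg
    have hginj : Function.Injective g := by
      intro i j hij
      by_contra hne'
      have hadj : (joinK G q).Adj (Sum.inr i) (Sum.inr j) := hne'
      have e1 := nbrSum_join_inr G q h i
      have e2 := nbrSum_join_inr G q h j
      have : g i = h (Sum.inr i) := rfl
      have : g j = h (Sum.inr j) := rfl
      exact hh.2 _ _ hadj (by omega)
    have hcard : (Finset.univ.image g).card = q := by
      rw [Finset.card_image_of_injective _ hginj, Finset.card_univ, Fintype.card_fin]
    have hsub : Finset.univ.image g ⊆ Finset.Icc 1 (eta (joinK G q)) := by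
      intro x hx
      obtain ⟨i, _, rfl⟩ := Finset.mem_image.1 hx
      exact Finset.mem_Icc.2 ⟨(hh.1 (Sum.inr i)).1, (hh.1 (Sum.inr i)).2⟩
    have := Finset.card_le_card hsub
    rw [hcard, Nat.card_Icc] at this
    omega
  omega
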